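/- Let p be an odd prime and let m, ν₁, ν₂ be integers such that p does not divide 6m, p does not divide ν₁, and p does not divide ν₂. Then p · Σ_{(x₁,x₂) ∈ (ℤ/pℤ)²} e( 6m(ν₁x₁² + ν₂x₂²) ) = p² · (−ν₁ν₂ / p), where e(a) = exp(2π√−1 · ā / p) and (·/p) is the Legendre symbol. (This complex number is the reduced quandle cocycle invariant Φ̃_p(𝒮₃(a, Δ̃^{2m})) for a = ∏_j σ₁^{pk_{1,j}} σ₂^{pk_{2,j}} with ν_i = Σ_j k_{i,j}.) -/
import Mathlib

/-- The additive character `e : ℤ/pℤ → ℂ`, `e(a) = exp(2π√-1 · ā / p)`, where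
`ā ∈ {0, …, p-1}` is the representative of `a`. -/
noncomputable def zmodChar (p : ℕ) (a : ZMod p) : ℂ :=
  Complex.exp (2 * Real.pi * Complex.I * (a.val : ℂ) / (p : ℂ))

open Finset

lemma zmodChar_eq_std (p : ℕ) [NeZero p] (a : ZMod p) :
    zmodChar p a = ZMod.stdAddChar a := by
  rw [ZMod.stdAddChar_apply, ZMod.toCircle_apply, zmodChar]

lemma sum_char_sq (p : ℕ) [Fact p.Prime] (hp2 : p ≠ 2) (b : ZMod p) (hb : b ≠ 0) :
    ∑ x : ZMod p, ZMod.stdAddChar (b * x ^ 2) =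
      ((quadraticChar (ZMod p)).ringHomComp (Int.castRingHom ℂ)) b *
        gaussSum ((quadraticChar (ZMod p)).ringHomComp (Int.castRingHom ℂ))
          ZMod.stdAddChar := by
  set χ := (quadraticChar (ZMod p)).ringHomComp (Int.castRingHom ℂ) with hχdef
  set ψ := ZMod.stdAddChar (N := p) with hψdef
  have hF : ringChar (ZMod p) ≠ 2 := by
    rw [ZMod.ringChar_zmod_n]; exact hp2
  -- Step 1: group by `t = x ^ 2`.
  have step1 : ∑ x : ZMod p, ψ (b * x ^ 2) = ∑ t : ZMod p, (χ t + 1) * ψ (b * t) := by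
    rw [← Finset.sum_fiberwise Finset.univ (fun x : ZMod p => x ^ 2)
      (fun x => ψ (b * x ^ 2))]
    refine Finset.sum_congr rfl fun t _ => ?_
    have hcard : (#{x : ZMod p | x ^ 2 = t}.toFinset : ℂ) = χ t + 1 := by
      have h := quadraticChar_card_sqrts hF t
      rw [hχdef, MulChar.ringHomComp_apply, eq_intCast]
      exact_mod_cast congrArg (fun z : ℤ => (z : ℂ)) h
    calc ∑ x ∈ Finset.univ.filter (fun x : ZMod p => x ^ 2 = t), ψ (b * x ^ 2)
        = ∑ x ∈ Finset.univ.filter (fun x : ZMod p => x ^ 2 = t), ψ (b * t) := by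
          refine Finset.sum_congr rfl fun x hx => ?_
          rw [(Finset.mem_filter.mp hx).2]
      _ = (#(Finset.univ.filter (fun x : ZMod p => x ^ 2 = t)) : ℂ) * ψ (b * t) := by
          rw [Finset.sum_const, nsmul_eq_mul]
      _ = (χ t + 1) * ψ (b * t) := by
          rw [← hcard]; congr 2
          simp [Set.toFinset_setOf]
  have hbu : IsUnit b := isUnit_iff_ne_zero.mpr hb
  -- the sum ∑ ψ (b * t) vanishes
  have hzero : ∑ t : ZMod p, ψ (b * t) = 0 := by
    have hne : AddChar.mulShift ψ b ≠ 1 := ZMod.isPrimitive_stdAddChar p hb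
    simpa [AddChar.mulShift_apply] using AddChar.sum_eq_zero_of_ne_one hne
  have step2 : ∑ t : ZMod p, (χ t + 1) * ψ (b * t) =
      gaussSum χ (AddChar.mulShift ψ b) := by
    simp only [add_mul, one_mul, Finset.sum_add_distrib, hzero, add_zero, gaussSum,
      AddChar.mulShift_apply]
  have hq : χ.IsQuadratic := (quadraticChar_isQuadratic (ZMod p)).comp _
  have hsq : χ b * χ b = 1 := by
    rw [← map_mul, ← pow_two]
    have h1 : quadraticChar (ZMod p) (b ^ 2) = 1 := quadraticChar_sq_one' hb
    rw [hχdef, MulChar.ringHomComp_apply, h1]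
    norm_num
  have step3 : gaussSum χ (AddChar.mulShift ψ b) = χ b * gaussSum χ ψ := by
    have h := gaussSum_mulShift χ ψ hbu.unit
    have hbb : (hbu.unit : ZMod p) = b := rfl
    rw [hbb] at h
    calc gaussSum χ (AddChar.mulShift ψ b)
        = (χ b * χ b) * gaussSum χ (AddChar.mulShift ψ b) := by rw [hsq, one_mul]
      _ = χ b * (χ b * gaussSum χ (AddChar.mulShift ψ b)) := by ring
      _ = χ b * gaussSum χ ψ := by rw [h]
  rw [step1, step2, step3]

/-- For an odd prime `p` and integers `m, ν₁, ν₂` with `p ∤ 6m`, `p ∤ ν₁`, `p ∤ ν₂`,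
the reduced quandle cocycle invariant
`p · Σ_{(x₁,x₂) ∈ (ℤ/pℤ)²} e(6m(ν₁x₁² + ν₂x₂²))` equals `p² · (-ν₁ν₂/p)`, where
`(·/p)` is the Legendre symbol. -/
theorem reduced_cocycle_invariant_degree_three (p : ℕ) [Fact p.Prime] (hp : Odd p)
    (m ν₁ ν₂ : ℤ) (hm : ¬ (p : ℤ) ∣ 6 * m) (hν₁ : ¬ (p : ℤ) ∣ ν₁) (hν₂ : ¬ (p : ℤ) ∣ ν₂) :
    (p : ℂ) * ∑ x : ZMod p × ZMod p,
        zmodChar p (((6 * m : ℤ) : ZMod p) *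
          ((ν₁ : ZMod p) * x.1 ^ 2 + (ν₂ : ZMod p) * x.2 ^ 2)) =
      (p : ℂ) ^ 2 * (legendreSym p (-ν₁ * ν₂) : ℂ) := by
  have hp2 : p ≠ 2 := by rintro rfl; exact (by norm_num : ¬ Odd 2) hp
  set χ := (quadraticChar (ZMod p)).ringHomComp (Int.castRingHom ℂ) with hχdef
  set ψ := ZMod.stdAddChar (N := p) with hψdef
  have hF : ringChar (ZMod p) ≠ 2 := by rw [ZMod.ringChar_zmod_n]; exact hp2
  have hc : ((6 * m : ℤ) : ZMod p) ≠ 0 := by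
    rw [Ne, ZMod.intCast_zmod_eq_zero_iff_dvd]; exact hm
  have hb₁ : (((6 * m : ℤ) : ZMod p) * (ν₁ : ZMod p)) ≠ 0 :=
    mul_ne_zero hc (by rw [Ne, ZMod.intCast_zmod_eq_zero_iff_dvd]; exact hν₁)
  have hb₂ : (((6 * m : ℤ) : ZMod p) * (ν₂ : ZMod p)) ≠ 0 :=
    mul_ne_zero hc (by rw [Ne, ZMod.intCast_zmod_eq_zero_iff_dvd]; exact hν₂)
  have hχ1 : χ ≠ 1 :=
    (MulChar.ringHomComp_ne_one_iff (Int.cast_injective)).mpr (quadraticChar_ne_one hF)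
  have hq : χ.IsQuadratic := (quadraticChar_isQuadratic (ZMod p)).comp _
  have hprim : ψ.IsPrimitive := ZMod.isPrimitive_stdAddChar p
  have hgsq : gaussSum χ ψ ^ 2 = χ (-1) * (p : ℂ) := by
    have := gaussSum_sq hχ1 hq hprim
    rwa [ZMod.card p] at this
  -- split the double sum
  have hsplit : ∑ x : ZMod p × ZMod p,
      zmodChar p (((6 * m : ℤ) : ZMod p) *
        ((ν₁ : ZMod p) * x.1 ^ 2 + (ν₂ : ZMod p) * x.2 ^ 2)) =
      (∑ x : ZMod p, ψ ((((6 * m : ℤ) : ZMod p) * (ν₁ : ZMod p)) * x ^ 2)) *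
      (∑ x : ZMod p, ψ ((((6 * m : ℤ) : ZMod p) * (ν₂ : ZMod p)) * x ^ 2)) := by
    rw [Finset.sum_mul_sum]
    rw [Fintype.sum_prod_type]
    refine Finset.sum_congr rfl fun x₁ _ => Finset.sum_congr rfl fun x₂ _ => ?_
    rw [zmodChar_eq_std]
    rw [show ((6 * m : ℤ) : ZMod p) * ((ν₁ : ZMod p) * x₁ ^ 2 + (ν₂ : ZMod p) * x₂ ^ 2)
        = (((6 * m : ℤ) : ZMod p) * (ν₁ : ZMod p)) * x₁ ^ 2
          + (((6 * m : ℤ) : ZMod p) * (ν₂ : ZMod p)) * x₂ ^ 2 by ring]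
    exact AddChar.map_add_eq_mul ψ _ _
  rw [hsplit, sum_char_sq p hp2 _ hb₁, sum_char_sq p hp2 _ hb₂]
  have hχmul : χ (((6 * m : ℤ) : ZMod p) * (ν₁ : ZMod p)) *
      χ (((6 * m : ℤ) : ZMod p) * (ν₂ : ZMod p)) = χ ((ν₁ : ZMod p) * (ν₂ : ZMod p)) := by
    rw [← map_mul]
    have : ((6 * m : ℤ) : ZMod p) * (ν₁ : ZMod p) * (((6 * m : ℤ) : ZMod p) * (ν₂ : ZMod p))
        = ((6 * m : ℤ) : ZMod p) ^ 2 * ((ν₁ : ZMod p) * (ν₂ : ZMod p)) := by ring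
    rw [this, map_mul]
    have h1 : quadraticChar (ZMod p) (((6 * m : ℤ) : ZMod p) ^ 2) = 1 := quadraticChar_sq_one' hc
    rw [hχdef, MulChar.ringHomComp_apply, MulChar.ringHomComp_apply, h1]
    norm_num
  have hleg : χ (-1) * χ ((ν₁ : ZMod p) * (ν₂ : ZMod p)) = (legendreSym p (-ν₁ * ν₂) : ℂ) := by
    rw [← map_mul]
    have : (-1 : ZMod p) * ((ν₁ : ZMod p) * (ν₂ : ZMod p)) = ((-ν₁ * ν₂ : ℤ) : ZMod p) := by
      push_cast; ring
    rw [this, hχdef, MulChar.ringHomComp_apply, eq_intCast, legendreSym]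
  calc (p : ℂ) * (χ (((6 * m : ℤ) : ZMod p) * (ν₁ : ZMod p)) * gaussSum χ ψ *
        (χ (((6 * m : ℤ) : ZMod p) * (ν₂ : ZMod p)) * gaussSum χ ψ))
      = (p : ℂ) * ((χ (((6 * m : ℤ) : ZMod p) * (ν₁ : ZMod p)) *
          χ (((6 * m : ℤ) : ZMod p) * (ν₂ : ZMod p))) * gaussSum χ ψ ^ 2) := by ring
    _ = (p : ℂ) * (χ ((ν₁ : ZMod p) * (ν₂ : ZMod p)) * (χ (-1) * (p : ℂ))) := by
        rw [hχmul, hgsq]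
    _ = (p : ℂ) ^ 2 * (χ (-1) * χ ((ν₁ : ZMod p) * (ν₂ : ZMod p))) := by ring
    _ = (p : ℂ) ^ 2 * (legendreSym p (-ν₁ * ν₂) : ℂ) := by rw [hleg]
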